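/- Let K ⊂ ℝ² be a convex body such that for every point x ∈ bd K there is a line through x that is an axis of symmetry of K (reflection across the line maps K to itself). Then K is a closed disc. -/

import Mathlib

open Set Metric EuclideanGeometry Filter RealInnerProductSpace Real

noncomputable section

abbrev E2 : Type := EuclideanSpace ℝ (Fin 2)
abbrev E3 : Type := EuclideanSpace ℝ (Fin 3)

/-- A convex body: a compact convex set with nonempty interior. -/
def IsConvexBody {n : ℕ} (K : Set (EuclideanSpace ℝ (Fin n))) : Prop :=
  Convex ℝ K ∧ IsCompact K ∧ (interior K).Nonempty

/-- The line L(p,q) through two points. -/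
def lineThru {n : ℕ} (p q : EuclideanSpace ℝ (Fin n)) : Set (EuclideanSpace ℝ (Fin n)) :=
  {x | ∃ t : ℝ, x = p + t • (q - p)}

/-- The line through p with direction v. -/
def lineDir {n : ℕ} (p v : EuclideanSpace ℝ (Fin n)) : Set (EuclideanSpace ℝ (Fin n)) :=
  {x | ∃ t : ℝ, x = p + t • v}

/-- The ray from N through a. -/
def rayFrom {n : ℕ} (N a : EuclideanSpace ℝ (Fin n)) : Set (EuclideanSpace ℝ (Fin n)) :=
  {x | ∃ t : ℝ, 0 ≤ t ∧ x = N + t • (a - N)}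

/-- The hyperplane through p with normal u (a line in ℝ², a plane in ℝ³). -/
def planeNormal {n : ℕ} (p u : EuclideanSpace ℝ (Fin n)) : Set (EuclideanSpace ℝ (Fin n)) :=
  {x | ⟪x - p, u⟫ = 0}

/-- Reflection across the line through p with direction v.  In ℝ³ this map is exactly the
rotation by angle π about that line. -/
def reflAxis {n : ℕ} (p v x : EuclideanSpace ℝ (Fin n)) : EuclideanSpace ℝ (Fin n) :=
  p + ((2 * ⟪x - p, v⟫ / ⟪v, v⟫) • v - (x - p))

/-- Reflection across the hyperplane through p with normal m. -/
def reflPlane {n : ℕ} (p m x : EuclideanSpace ℝ (Fin n)) : EuclideanSpace ℝ (Fin n) :=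
  x - ((2 * ⟪x - p, m⟫ / ⟪m, m⟫) • m)

/-- The cone S_x(W) generated by W with apex x. -/
def coneHull {n : ℕ} (x : EuclideanSpace ℝ (Fin n)) (W : Set (EuclideanSpace ℝ (Fin n))) :
    Set (EuclideanSpace ℝ (Fin n)) :=
  {z | ∃ y ∈ W, ∃ l : ℝ, 0 ≤ l ∧ z = x + l • (y - x)}

/-- C_x(W), the boundary of the cone S_x(W). -/
def coneBd {n : ℕ} (x : EuclideanSpace ℝ (Fin n)) (W : Set (EuclideanSpace ℝ (Fin n))) :
    Set (EuclideanSpace ℝ (Fin n)) := frontier (coneHull x W)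

/-- P is a support hyperplane of K at S. -/
def IsSupportPlaneAt {n : ℕ} (K : Set (EuclideanSpace ℝ (Fin n))) (S : EuclideanSpace ℝ (Fin n))
    (P : Set (EuclideanSpace ℝ (Fin n))) : Prop :=
  ∃ u, u ≠ 0 ∧ P = planeNormal S u ∧ ∀ y ∈ K, ⟪y - S, u⟫ ≤ 0

/-- The stereographic property of a planar convex body K with respect to the point N and the
support line with normal u: for every chord [a,b], reflecting a, b across the bisector B of the
angle at N between L(N,a) and L(N,b) (i.e. the line through N whose reflection maps the ray
from N through a onto the ray from N through b) yields a segment parallel to the support line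
(i.e. perpendicular to its normal u). -/
def StereoProp (K : Set E2) (N u : E2) : Prop :=
  ∀ a ∈ frontier K, ∀ b ∈ frontier K, a ≠ N → b ≠ N →
    ∀ w : E2, w ≠ 0 → reflAxis N w '' rayFrom N a = rayFrom N b →
      ⟪reflAxis N w a - reflAxis N w b, u⟫ = 0

/-- f is a rotation about the line L: an orientation preserving isometry of ℝ³ fixing L
pointwise. -/
def IsRotationAbout (f : E3 → E3) (L : Set E3) : Prop :=
  ∃ (A : E3 ≃ₗᵢ[ℝ] E3) (b : E3), (∀ x, f x = A x + b) ∧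
    LinearMap.det (A.toLinearEquiv : E3 →ₗ[ℝ] E3) = 1 ∧ ∀ x ∈ L, f x = x

/-- The hypotheses of the stereographic characterization theorem (Theorem 5 of the paper):
K is a convex body, N ≠ S are boundary points, Π_S = planeNormal S u is the unique support
plane at S, Ψ is the stereographic projection from N onto Π_S, and every section K_Γ = Γ ∩ K
(Γ meeting int K, N ∉ Γ, Γ not parallel to Π_S) gives a cone C_N(K_Γ) invariant under a
rotation R^Γ by π about some line L_Γ, with Ψ(K_Γ) = R^Γ(K'_Γ) for a homothetic copy K'_Γ of
K_Γ centered at N. -/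
def StereoHyp (K : Set E3) (N S u : E3) (Ψ : E3 → E3) : Prop :=
  IsConvexBody K ∧ N ∈ frontier K ∧ S ∈ frontier K ∧ N ≠ S ∧ u ≠ 0 ∧
  IsSupportPlaneAt K S (planeNormal S u) ∧
  (∀ P, IsSupportPlaneAt K S P → P = planeNormal S u) ∧
  (∀ x ∈ K, x ≠ N → Ψ x ∈ lineThru N x ∧ Ψ x ∈ planeNormal S u) ∧
  (∀ p w : E3, w ≠ 0 → (planeNormal p w ∩ interior K).Nonempty → N ∉ planeNormal p w →
    ¬ (∃ s : ℝ, w = s • u) →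
    ∃ q v : E3, v ≠ 0 ∧
      reflAxis q v '' coneBd N (planeNormal p w ∩ K) = coneBd N (planeNormal p w ∩ K) ∧
      ∃ lam : ℝ, 0 < lam ∧
        Ψ '' (planeNormal p w ∩ K) =
          reflAxis q v '' ((fun x => N + lam • (x - N)) '' (planeNormal p w ∩ K)))

/-- The circumscribed disc of K: the closed disc of minimal radius containing K. -/
def IsCircumDisc (K : Set E2) (c : E2) (r : ℝ) : Prop :=
  K ⊆ closedBall c r ∧ ∀ c' : E2, ∀ r' : ℝ, K ⊆ closedBall c' r' → r ≤ r'

/-- An ellipse in ℝ³: the image of the unit circle under an injective affine map. -/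
def IsEllipse3 (s : Set E3) : Prop :=
  ∃ T : E2 →ᵃ[ℝ] E3, Function.Injective T ∧ s = T '' (sphere (0 : E2) 1)
namespace Aux12

/-- The linear part of the reflection. -/
def lref (v z : E2) : E2 := (2 * ⟪z, v⟫ / ⟪v, v⟫) • v - z

lemma reflAxis_eq (p v x : E2) : reflAxis p v x = p + lref v (x - p) := rfl

lemma lref_sub (v z w : E2) : lref v (z - w) = lref v z - lref v w := by
  simp only [lref, inner_sub_left]
  rw [show 2 * (⟪z,v⟫ - ⟪w,v⟫) / ⟪v,v⟫ = 2*⟪z,v⟫/⟪v,v⟫ - 2*⟪w,v⟫/⟪v,v⟫ by ring]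
  rw [sub_smul]
  abel

lemma norm_lref (v z : E2) (hv : v ≠ 0) : ‖lref v z‖ = ‖z‖ := by
  have hvv : ⟪v,v⟫ ≠ 0 := inner_self_ne_zero.mpr hv
  have h1 : ‖lref v z‖^2 = ‖z‖^2 := by
    rw [lref, norm_sub_sq_real, real_inner_smul_left, norm_smul,
      Real.norm_eq_abs, mul_pow, sq_abs,
      show ‖v‖^2 = ⟪v,v⟫ from (real_inner_self_eq_norm_sq v).symm,
      real_inner_comm z v]
    have key : ∀ s b : ℝ, b ≠ 0 → (2*s/b)^2 * b - 2*(2*s/b*s) = 0 := by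
      intro s b hb; field_simp; ring
    have := key ⟪z,v⟫ ⟪v,v⟫ hvv
    linarith [this]
  nlinarith [norm_nonneg (lref v z), norm_nonneg z]

lemma reflAxis_dist (p v x y : E2) (hv : v ≠ 0) :
    dist (reflAxis p v x) (reflAxis p v y) = dist x y := by
  have h : reflAxis p v x - reflAxis p v y = lref v (x - y) := by
    rw [reflAxis_eq, reflAxis_eq, add_sub_add_left_eq_sub, ← lref_sub]
    congr 1
    abel
  rw [dist_eq_norm, h, norm_lref _ _ hv, dist_eq_norm]

lemma lref_invol (v z : E2) (hv : v ≠ 0) : lref v (lref v z) = z := by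
  have hvv : ⟪v,v⟫ ≠ 0 := inner_self_ne_zero.mpr hv
  rw [lref, lref, inner_sub_left, real_inner_smul_left]
  have key : ∀ s b : ℝ, b ≠ 0 → 2 * (2*s/b*b - s) / b = 2*s/b := by
    intro s b hb; field_simp; ring
  rw [key ⟪z,v⟫ ⟪v,v⟫ hvv]
  abel

lemma reflAxis_invol (p v x : E2) (hv : v ≠ 0) : reflAxis p v (reflAxis p v x) = x := by
  rw [reflAxis_eq, reflAxis_eq, add_sub_cancel_left, lref_invol _ _ hv]
  abel

lemma reflAxis_fix (p v c : E2) (hv : v ≠ 0) (h : reflAxis p v c = c) :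
    ∃ t : ℝ, c = p + t • v := by
  have hvv : ⟪v,v⟫ ≠ 0 := inner_self_ne_zero.mpr hv
  refine ⟨⟪c - p, v⟫ / ⟪v,v⟫, ?_⟩
  have h2 : lref v (c - p) = c - p := by
    have h' := h
    rw [reflAxis_eq] at h'
    have := congrArg (fun w => w - p) h'
    simpa only [add_sub_cancel_left] using this
  rw [lref, sub_eq_iff_eq_add] at h2
  have h4 : (⟪c - p, v⟫ / ⟪v,v⟫) • v = c - p := by
    have e1 : (⟪c - p, v⟫ / ⟪v,v⟫) • v
        = (1/2 : ℝ) • ((2 * ⟪c - p, v⟫ / ⟪v,v⟫) • v) := by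
      rw [smul_smul]; congr 1; ring
    rw [e1, h2, ← two_smul ℝ (c - p), smul_smul]
    norm_num
  rw [h4]; abel

lemma reflAxis_base (p v : E2) (t : ℝ) (hv : v ≠ 0) :
    reflAxis (p + t • v) v = reflAxis p v := by
  have hvv : ⟪v,v⟫ ≠ 0 := inner_self_ne_zero.mpr hv
  funext x
  rw [reflAxis_eq, reflAxis_eq, show x - (p + t • v) = (x - p) - t • v by abel, lref_sub]
  have hl : lref v (t • v) = t • v := by
    rw [lref, real_inner_smul_left,
      show 2 * (t * ⟪v,v⟫) / ⟪v,v⟫ = (2*t) * (⟪v,v⟫/⟪v,v⟫) by ring,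
      div_self hvv, mul_one, two_mul, add_smul]
    abel
  rw [hl]
  abel

lemma reflAxis_scale (p v : E2) (s : ℝ) (hs : s ≠ 0) (hv : v ≠ 0) :
    reflAxis p (s • v) = reflAxis p v := by
  have hvv : ⟪v,v⟫ ≠ 0 := inner_self_ne_zero.mpr hv
  funext x
  rw [reflAxis, reflAxis]
  congr 2
  rw [real_inner_smul_right, real_inner_smul_right, real_inner_smul_left, smul_smul]
  congr 1
  have key : ∀ a b : ℝ, b ≠ 0 → 2 * (s*a) / (s*(s*b)) * s = 2*a/b := by
    intro a b hb; field_simp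
  exact key ⟪x - p, v⟫ ⟪v,v⟫ hvv

lemma reflAxis_mem (p v : E2) {K : Set E2} (hv : v ≠ 0) (hK : reflAxis p v '' K = K)
    {x : E2} (hx : x ∈ K) : reflAxis p v x ∈ K := by
  rw [← hK]; exact ⟨x, hx, rfl⟩

lemma reflAxis_mem' (p v : E2) {K : Set E2} (hv : v ≠ 0) (hK : reflAxis p v '' K = K)
    {x : E2} (hx : x ∈ K) : ∃ y ∈ K, x = reflAxis p v y := by
  have : x ∈ reflAxis p v '' K := hK.symm ▸ hx
  obtain ⟨y, hy, hxy⟩ := this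
  exact ⟨y, hy, hxy.symm⟩


/-- Existence of a smallest enclosing closed ball. -/
lemma exists_circum (K : Set E2) (hcomp : IsCompact K) (hne : K.Nonempty) :
    ∃ c r, K ⊆ closedBall c r ∧ ∀ c' r', K ⊆ closedBall c' r' → r ≤ r' := by
  obtain ⟨y₀, hy₀⟩ := hne
  set Rad : E2 → ℝ := fun c => sSup ((fun y => dist y c) '' K) with hRad
  have hbdd : ∀ c : E2, BddAbove ((fun y => dist y c) '' K) := fun c =>
    (hcomp.image (continuous_id.dist continuous_const)).bddAbove
  have hle : ∀ c : E2, ∀ y ∈ K, dist y c ≤ Rad c := fun c y hy =>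
    le_csSup (hbdd c) ⟨y, hy, rfl⟩
  have hRadle : ∀ c : E2, ∀ m : ℝ, (∀ y ∈ K, dist y c ≤ m) → Rad c ≤ m := by
    intro c m hm
    exact csSup_le (⟨dist y₀ c, ⟨y₀, hy₀, rfl⟩⟩) (by rintro _ ⟨y, hy, rfl⟩; exact hm y hy)
  have hlip : ∀ c c' : E2, Rad c ≤ Rad c' + dist c' c := by
    intro c c'
    refine hRadle c _ (fun y hy => ?_)
    calc dist y c ≤ dist y c' + dist c' c := dist_triangle _ _ _
    _ ≤ Rad c' + dist c' c := by linarith [hle c' y hy]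
  have hcont : Continuous Rad := by
    refine LipschitzWith.continuous (K := 1) (LipschitzWith.of_dist_le_mul fun c c' => ?_)
    rw [Real.dist_eq, NNReal.coe_one, one_mul, abs_sub_le_iff]
    have e1 := hlip c c'
    have e2 := hlip c' c
    have e3 : dist c c' = dist c' c := dist_comm c c'
    constructor <;> linarith
  set D := 2 * Rad y₀ + 1 with hD
  have hRy₀ : 0 ≤ Rad y₀ := le_trans dist_nonneg (hle y₀ y₀ hy₀)
  have hball : IsCompact (closedBall y₀ D) := isCompact_closedBall _ _
  have hbne : (closedBall y₀ D).Nonempty := ⟨y₀, by simp [hD]; linarith⟩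
  obtain ⟨c, hcB, hcmin⟩ := hball.exists_isMinOn hbne hcont.continuousOn
  refine ⟨c, Rad c, fun y hy => mem_closedBall.mpr (hle c y hy), ?_⟩
  intro c' r' hsub'
  by_cases hc' : c' ∈ closedBall y₀ D
  · have h1 : Rad c ≤ Rad c' := hcmin hc'
    have h2 : Rad c' ≤ r' := hRadle c' r' (fun y hy => mem_closedBall.mp (hsub' hy))
    linarith
  · have h0 : dist y₀ c' > D := by
      simpa [mem_closedBall, dist_comm] using hc'
    have h1 : dist y₀ c' ≤ r' := mem_closedBall.mp (hsub' hy₀)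
    have h2 : Rad c ≤ Rad y₀ := hcmin (by simp [mem_closedBall, hD]; linarith)
    linarith

/-- Uniqueness of the center at the minimal radius. -/
lemma circum_unique {K : Set E2} {c : E2} {r : ℝ} (hne : K.Nonempty)
    (hmin : ∀ c' r', K ⊆ closedBall c' r' → r ≤ r')
    {c' : E2} (h' : K ⊆ closedBall c' r) (h : K ⊆ closedBall c r) : c' = c := by
  by_contra hcc
  set d := dist c' c with hd
  have hdpos : 0 < d := dist_pos.mpr hcc
  set m : E2 := (1/2 : ℝ) • (c + c') with hm
  obtain ⟨y₁, hy₁⟩ := hne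
  have hr0 : 0 ≤ r := le_trans dist_nonneg (mem_closedBall.mp (h hy₁))
  have hd2 : d ≤ 2 * r := by
    have e1 : dist y₁ c ≤ r := mem_closedBall.mp (h hy₁)
    have e2 : dist y₁ c' ≤ r := mem_closedBall.mp (h' hy₁)
    calc d = dist c' c := hd
    _ ≤ dist c' y₁ + dist y₁ c := dist_triangle _ _ _
    _ ≤ 2 * r := by rw [dist_comm c' y₁]; linarith
  have hne : K.Nonempty := ⟨y₁, hy₁⟩
  have hsub : K ⊆ closedBall m (Real.sqrt (r^2 - d^2/4)) := by
    intro y hy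
    have ha : ‖y - c‖ ≤ r := by rw [← dist_eq_norm]; exact mem_closedBall.mp (h hy)
    have hb : ‖y - c'‖ ≤ r := by rw [← dist_eq_norm]; exact mem_closedBall.mp (h' hy)
    have hym : y - m = (1/2 : ℝ) • ((y - c) + (y - c')) := by
      rw [hm, smul_add, smul_add]
      rw [show y = (1/2 : ℝ) • y + (1/2 : ℝ) • y by rw [← add_smul]; norm_num]
      module
    have hnorm : ‖y - m‖^2 = (‖y-c‖^2 + 2*⟪y-c, y-c'⟫ + ‖y-c'‖^2) / 4 := by
      rw [hym, norm_smul, Real.norm_eq_abs, mul_pow, sq_abs, norm_add_sq_real]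
      ring
    have hpar : ‖(y-c) - (y-c')‖^2 = ‖y-c‖^2 - 2*⟪y-c, y-c'⟫ + ‖y-c'‖^2 :=
      norm_sub_sq_real _ _
    have hcc' : ‖(y-c) - (y-c')‖ = d := by
      rw [show (y-c) - (y-c') = c' - c by abel, hd, dist_eq_norm]
    have hsq : ‖y - m‖^2 ≤ r^2 - d^2/4 := by
      rw [hnorm]
      have h1 : ‖y-c‖^2 ≤ r^2 := by nlinarith [norm_nonneg (y-c)]
      have h2 : ‖y-c'‖^2 ≤ r^2 := by nlinarith [norm_nonneg (y-c')]
      rw [hcc'] at hpar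
      nlinarith [sq_nonneg d]
    rw [mem_closedBall, dist_eq_norm]
    calc ‖y - m‖ = Real.sqrt (‖y - m‖^2) := (Real.sqrt_sq (norm_nonneg _)).symm
    _ ≤ Real.sqrt (r^2 - d^2/4) := Real.sqrt_le_sqrt hsq
  have hge := hmin m _ hsub
  have : r^2 ≤ r^2 - d^2/4 := by
    have h1 : r ≤ Real.sqrt (r^2 - d^2/4) := hge
    have h2 : 0 ≤ r^2 - d^2/4 := by
      by_contra hneg
      push_neg at hneg
      nlinarith [hd2, hdpos]
    nlinarith [Real.sq_sqrt h2, Real.sqrt_nonneg (r^2 - d^2/4)]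
  nlinarith


/-- Any axis of symmetry's reflection fixes the circumcenter. -/
lemma refl_fixes_center {K : Set E2} {c : E2} {r : ℝ} (hne : K.Nonempty)
    (hsub : K ⊆ closedBall c r) (hmin : ∀ c' r', K ⊆ closedBall c' r' → r ≤ r')
    {p v : E2} (hv : v ≠ 0) (hK : reflAxis p v '' K = K) : reflAxis p v c = c := by
  have h' : K ⊆ closedBall (reflAxis p v c) r := by
    intro z hz
    obtain ⟨w, hw, hzw⟩ := reflAxis_mem' p v hv hK hz
    rw [mem_closedBall, hzw, reflAxis_dist p v w c hv]
    exact mem_closedBall.mp (hsub hw)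
  exact circum_unique hne hmin h' hsub

/-- If the enclosing ball is minimal, there is a farthest point weakly on the far side of
any direction u. -/
lemma exists_far_point {K : Set E2} {c : E2} {r : ℝ} (hcomp : IsCompact K)
    (hsub : K ⊆ closedBall c r) (hmin : ∀ c' r', K ⊆ closedBall c' r' → r ≤ r')
    (hr : 0 < r) (u : E2) :
    ∃ y ∈ K, dist y c = r ∧ ⟪y - c, u⟫ ≤ 0 := by
  set ε : ℕ → ℝ := fun n => 1 / (n + 1) with hε
  have hεpos : ∀ n, 0 < ε n := fun n => by positivity
  have hεlim : Tendsto ε atTop (nhds 0) := tendsto_one_div_add_atTop_nhds_zero_nat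
  have hεle1 : ∀ n, ε n ≤ 1 := by
    intro n
    rw [hε]
    rw [div_le_one (by positivity)]
    simp
  -- choose near-extremal points
  have hsel : ∀ n : ℕ, ∃ y ∈ K, r - (ε n)^2 < dist y (c + ε n • u) := by
    intro n
    by_contra hcon
    push_neg at hcon
    have : K ⊆ closedBall (c + ε n • u) (r - (ε n)^2) := fun y hy =>
      mem_closedBall.mpr (hcon y hy)
    have := hmin _ _ this
    nlinarith [hεpos n]
  choose y hyK hyd using hsel
  obtain ⟨x, hxK, φ, hφ, hlim⟩ := hcomp.tendsto_subseq hyK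
  have hεφ : Tendsto (fun n => ε (φ n)) atTop (nhds 0) :=
    hεlim.comp hφ.tendsto_atTop
  have hcε : Tendsto (fun n => c + ε (φ n) • u) atTop (nhds c) := by
    have : Tendsto (fun n => ε (φ n) • u) atTop (nhds ((0:ℝ) • u)) :=
      hεφ.smul_const u
    rw [zero_smul] at this
    simpa using tendsto_const_nhds.add this
  have hdlim : Tendsto (fun n => dist (y (φ n)) (c + ε (φ n) • u)) atTop (nhds (dist x c)) :=
    hlim.dist hcε
  have hrlim : Tendsto (fun n => r - (ε (φ n))^2) atTop (nhds r) := by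
    have : Tendsto (fun n => (ε (φ n))^2) atTop (nhds 0) := by
      simpa using hεφ.pow 2
    simpa using tendsto_const_nhds.sub this
  have hdxc : dist x c = r := by
    have h1 : r ≤ dist x c := by
      refine le_of_tendsto_of_tendsto hrlim hdlim ?_
      filter_upwards with n
      exact le_of_lt (hyd (φ n))
    exact le_antisymm (mem_closedBall.mp (hsub hxK)) h1
  refine ⟨x, hxK, hdxc, ?_⟩
  have hinlim : Tendsto (fun n => ⟪y (φ n) - c, u⟫) atTop (nhds ⟪x - c, u⟫) := by
    have hsub' : Tendsto (fun n => y (φ n) - c) atTop (nhds (x - c)) :=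
      hlim.sub tendsto_const_nhds
    exact hsub'.inner tendsto_const_nhds
  have hbound : ∀ᶠ n in atTop, ⟪y (φ n) - c, u⟫ ≤ ε (φ n) * ((2*r + ‖u‖^2)/2) := by
    filter_upwards [hεφ.eventually (gt_mem_nhds hr)] with n hn
    set e := ε (φ n) with he
    have hepos : 0 < e := hεpos (φ n)
    have he1 : e ≤ 1 := hεle1 (φ n)
    have hesq : e^2 ≤ e := by nlinarith
    have hrε : 0 ≤ r - e^2 := by nlinarith
    have hyd' := hyd (φ n)
    set z := y (φ n) with hz
    have hzK := hyK (φ n)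
    have hdistsq : (dist z (c + e • u))^2
        = ‖z - c‖^2 - 2*(e*⟪z - c, u⟫) + e^2*‖u‖^2 := by
      rw [dist_eq_norm, show z - (c + e • u) = (z - c) - e • u by abel,
        norm_sub_sq_real, real_inner_smul_right, norm_smul, Real.norm_eq_abs,
        mul_pow, sq_abs]
    have hsq : (r - e^2)^2 < (dist z (c + e • u))^2 :=
      pow_lt_pow_left₀ hyd' hrε (by norm_num)
    have hzc : ‖z - c‖ ≤ r := by
      rw [← dist_eq_norm]; exact mem_closedBall.mp (hsub hzK)
    have hzc2 : ‖z - c‖^2 ≤ r^2 := by nlinarith [norm_nonneg (z - c)]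
    rw [hdistsq] at hsq
    nlinarith [hepos, sq_nonneg e, sq_nonneg (e*e)]
  have hClim : Tendsto (fun n => ε (φ n) * ((2*r + ‖u‖^2)/2)) atTop (nhds 0) := by
    simpa using hεφ.mul_const ((2*r + ‖u‖^2)/2)
  exact le_of_tendsto_of_tendsto hinlim hClim hbound


/-- A point of K at maximal distance from the circumcenter is a frontier point. -/
lemma far_mem_frontier {K : Set E2} {c : E2} {r : ℝ} (hclosed : IsClosed K)
    (hsub : K ⊆ closedBall c r) (hr : 0 < r) {y : E2} (hy : y ∈ K) (hyr : dist y c = r) :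
    y ∈ frontier K := by
  rw [hclosed.frontier_eq]
  refine ⟨hy, fun hint => ?_⟩
  rw [mem_interior_iff_mem_nhds, Metric.mem_nhds_iff] at hint
  obtain ⟨δ, hδ, hball⟩ := hint
  have hnorm : ‖y - c‖ = r := by rw [← dist_eq_norm]; exact hyr
  set s := δ / (2 * r) with hs
  have hspos : 0 < s := by positivity
  have hval : s * r = δ / 2 := by
    rw [hs]; field_simp
  set y' := y + s • (y - c) with hy'
  have hy'K : y' ∈ K := by
    apply hball
    rw [mem_ball, dist_eq_norm, hy',
      show y + s • (y - c) - y = s • (y - c) by abel,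
      norm_smul, Real.norm_eq_abs, abs_of_pos hspos, hnorm, hval]
    linarith
  have hdist : dist y' c = (1 + s) * r := by
    rw [dist_eq_norm, hy',
      show y + s • (y - c) - c = (1 + s) • (y - c) by rw [add_smul, one_smul]; abel,
      norm_smul, Real.norm_eq_abs, abs_of_pos (by linarith), hnorm]
  have := mem_closedBall.mp (hsub hy'K)
  rw [hdist] at this
  nlinarith

/-- The circumcenter lies in the interior of K. -/
lemma center_mem_interior {K : Set E2} {c : E2} {r : ℝ}
    (hKconv : Convex ℝ K) (hcomp : IsCompact K) (hint : (interior K).Nonempty)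
    (hsub : K ⊆ closedBall c r) (hmin : ∀ c' r', K ⊆ closedBall c' r' → r ≤ r')
    (hr : 0 < r)
    (hsym : ∀ x ∈ frontier K, ∃ v : E2, v ≠ 0 ∧ reflAxis x v '' K = K) :
    c ∈ interior K := by
  by_contra hc
  have hKne : K.Nonempty := hint.mono interior_subset
  obtain ⟨f, hf⟩ := geometric_hahn_banach_open_point hKconv.interior isOpen_interior hc
  obtain ⟨a, ha⟩ := hint
  -- f ≤ f c on all of K
  have hfK : ∀ y ∈ K, f y ≤ f c := by
    intro y hy
    set t : ℕ → ℝ := fun n => 1 / (n + 1) with ht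
    have htpos : ∀ n, 0 < t n := fun n => by positivity
    have htle : ∀ n, t n ≤ 1 := by
      intro n; rw [ht, div_le_one (by positivity)]; simp
    have hmem : ∀ n : ℕ, (t n) • a + (1 - t n) • y ∈ interior K := fun n =>
      hKconv.combo_interior_self_mem_interior ha hy (htpos n) (by linarith [htle n])
        (by ring)
    have hfn : ∀ n : ℕ, t n * f a + (1 - t n) * f y < f c := by
      intro n
      have := hf _ (hmem n)
      simpa [map_add, map_smul, smul_eq_mul] using this
    have hlim : Tendsto (fun n : ℕ => t n * f a + (1 - t n) * f y) atTop (nhds (f y)) := by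
      have h0 : Tendsto t atTop (nhds 0) := by
        rw [ht]; exact tendsto_one_div_add_atTop_nhds_zero_nat
      have h1 := (h0.mul_const (f a)).add
        (((tendsto_const_nhds (x := (1:ℝ))).sub h0).mul_const (f y))
      have h2 : (0:ℝ) * f a + (1 - 0) * f y = f y := by ring
      rw [h2] at h1
      exact h1
    exact le_of_tendsto hlim (Filter.Eventually.of_forall fun n => (hfn n).le)
  -- farthest points are strictly below the support level
  have hstrict : ∀ y ∈ K, dist y c = r → f y < f c := by
    intro y hy hyr
    rcases lt_or_eq_of_le (hfK y hy) with h | hfy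
    · exact h
    exfalso
    have hyfr : y ∈ frontier K := far_mem_frontier hcomp.isClosed hsub hr hy hyr
    obtain ⟨v, hv, hKv⟩ := hsym y hyfr
    have hcfix : reflAxis y v c = c := refl_fixes_center hKne hsub hmin hv hKv
    obtain ⟨t, hct⟩ := reflAxis_fix y v c hv hcfix
    have hyc : y ≠ c := by
      intro h
      rw [h] at hyr
      simp at hyr
      linarith
    have htne : t ≠ 0 := by
      intro h0
      rw [h0, zero_smul, add_zero] at hct
      exact hyc hct.symm
    have hfv : f v = 0 := by
      have h1 : f c = f y + t * f v := by
        rw [hct]; simp [map_add, map_smul, smul_eq_mul]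
      rw [← hfy] at h1
      have : t * f v = 0 := by linarith
      exact (mul_eq_zero.mp this).resolve_left htne
    have haK : a ∈ K := interior_subset ha
    obtain ⟨xa, hxa, haxa⟩ := reflAxis_mem' y v hv hKv haK
    have hfa : f a = 2 * f c - f xa := by
      rw [haxa, reflAxis]
      simp only [map_add, map_sub, map_smul, smul_eq_mul]
      rw [hfv]
      rw [← hfy]
      ring
    have h1 := hf a ha
    have h2 := hfK xa hxa
    linarith
  -- contradiction with the existence of a weakly-far point
  set u₀ := (InnerProductSpace.toDual ℝ E2).symm f with hu₀def
  have hu₀ : ∀ x : E2, ⟪u₀, x⟫ = f x := fun x => InnerProductSpace.toDual_symm_apply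
  obtain ⟨y, hyK, hyr, hyi⟩ := exists_far_point hcomp hsub hmin hr (-u₀)
  have h1 : 0 ≤ ⟪y - c, u₀⟫ := by
    rw [inner_neg_right] at hyi
    linarith
  have h2 : ⟪y - c, u₀⟫ = f y - f c := by
    rw [real_inner_comm, hu₀, map_sub]
  linarith [hstrict y hyK hyr]



/-- Every line through the circumcenter is an axis of symmetry. -/
lemma all_reflections {K : Set E2} {c : E2} {r : ℝ}
    (hKconv : Convex ℝ K) (hcomp : IsCompact K) (hcint : c ∈ interior K)
    (hsub : K ⊆ closedBall c r) (hmin : ∀ c' r', K ⊆ closedBall c' r' → r ≤ r')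
    (hsym : ∀ x ∈ frontier K, ∃ v : E2, v ≠ 0 ∧ reflAxis x v '' K = K)
    (w : E2) (hw : w ≠ 0) : reflAxis c w '' K = K := by
  have hcK : c ∈ K := interior_subset hcint
  have hKne : K.Nonempty := ⟨c, hcK⟩
  have hwn : 0 < ‖w‖ := norm_pos_iff.mpr hw
  set S : Set ℝ := {t : ℝ | c + t • w ∈ K} with hS
  have hSclosed : IsClosed S := by
    have : S = (fun t : ℝ => c + t • w) ⁻¹' K := rfl
    rw [this]
    exact IsClosed.preimage (by continuity) hcomp.isClosed
  have hSne : (0:ℝ) ∈ S := by simp [hS, hcK]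
  have hSbdd : BddAbove S := by
    refine ⟨r / ‖w‖, fun t ht => ?_⟩
    have := mem_closedBall.mp (hsub ht)
    rw [dist_eq_norm, add_sub_cancel_left, norm_smul, Real.norm_eq_abs] at this
    rw [le_div_iff₀ hwn]
    calc t * ‖w‖ ≤ |t| * ‖w‖ := by
          have := le_abs_self t
          nlinarith [hwn]
    _ ≤ r := this
  set T := sSup S with hT
  have hTS : T ∈ S := hSclosed.csSup_mem ⟨0, hSne⟩ hSbdd
  -- T is positive
  obtain ⟨δ, hδ, hball⟩ := Metric.mem_nhds_iff.mp (mem_interior_iff_mem_nhds.mp hcint)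
  have ht₀ : δ / (2 * ‖w‖) ∈ S := by
    apply hball
    rw [mem_ball, dist_eq_norm, add_sub_cancel_left, norm_smul, Real.norm_eq_abs,
      abs_of_pos (by positivity)]
    rw [div_mul_eq_mul_div, div_lt_iff₀ (by positivity)]
    nlinarith
  have hTpos : 0 < T := lt_of_lt_of_le (by positivity) (le_csSup hSbdd ht₀)
  set x := c + T • w with hx
  have hxK : x ∈ K := hTS
  have hxfr : x ∈ frontier K := by
    rw [hcomp.isClosed.frontier_eq]
    refine ⟨hxK, fun hintx => ?_⟩
    obtain ⟨δ', hδ', hball'⟩ := Metric.mem_nhds_iff.mp (mem_interior_iff_mem_nhds.mp hintx)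
    have : T + δ' / (2 * ‖w‖) ∈ S := by
      apply hball'
      rw [mem_ball, hx, dist_eq_norm]
      rw [show c + (T + δ' / (2 * ‖w‖)) • w - (c + T • w) = (δ' / (2 * ‖w‖)) • w by
        rw [add_smul]; abel]
      rw [norm_smul, Real.norm_eq_abs, abs_of_pos (by positivity)]
      rw [div_mul_eq_mul_div, div_lt_iff₀ (by positivity)]
      nlinarith
    have := le_csSup hSbdd this
    have hpos : 0 < δ' / (2 * ‖w‖) := by positivity
    linarith
  obtain ⟨v, hv, hKv⟩ := hsym x hxfr
  have hcfix : reflAxis x v c = c := refl_fixes_center hKne hsub hmin hv hKv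
  obtain ⟨t, hct⟩ := reflAxis_fix x v c hv hcfix
  have hxc : x ≠ c := by
    rw [hx]
    intro h
    have : T • w = 0 := by
      have := congrArg (fun z => z - c) h
      simpa using this
    rcases smul_eq_zero.mp this with h' | h'
    · exact absurd h' (ne_of_gt hTpos)
    · exact hw h'
  have htne : t ≠ 0 := by
    intro h0
    rw [h0, zero_smul, add_zero] at hct
    exact hxc hct.symm
  have hveq : v = (-T/t) • w := by
    have h1 : t • v = -(T • w) := by
      have h2 : x + t • v = c := hct.symm
      have h3 : t • v = c - x := by rw [← h2]; abel
      rw [h3, hx]; abel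
    have h3 : v = t⁻¹ • (t • v) := by rw [smul_smul, inv_mul_cancel₀ htne, one_smul]
    rw [h3, h1, smul_neg, smul_smul, ← neg_smul]
    congr 1
    field_simp
  have hs : (-T/t) ≠ 0 := by
    apply div_ne_zero
    · exact neg_ne_zero.mpr (ne_of_gt hTpos)
    · exact htne
  have hbase : reflAxis x v = reflAxis c v := by
    have : x = c + (-t) • v := by
      rw [neg_smul]
      have := congrArg (fun z => z - t • v) hct
      rw [show x + t • v - t • v = x by abel] at this
      rw [← this]
      abel
    rw [this, reflAxis_base c v (-t) hv]
  have hscale : reflAxis c v = reflAxis c w := by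
    rw [hveq, reflAxis_scale c w (-T/t) hs hw]
  rw [← hscale, ← hbase]
  exact hKv

/-- A vector orthogonal to a given nonzero vector in the plane. -/
lemma exists_orth (a : E2) (ha : a ≠ 0) : ∃ w : E2, w ≠ 0 ∧ ⟪a, w⟫ = 0 := by
  refine ⟨a 0 • EuclideanSpace.single 1 (1:ℝ) - a 1 • EuclideanSpace.single 0 (1:ℝ), ?_, ?_⟩
  · intro h
    apply ha
    have h0 := congrArg (fun w : E2 => w 0) h
    have h1 := congrArg (fun w : E2 => w 1) h
    simp [EuclideanSpace.single_apply] at h0 h1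
    ext i
    fin_cases i <;> simp [h0, h1]
  · rw [inner_sub_right, real_inner_smul_right, real_inner_smul_right]
    simp [EuclideanSpace.inner_single_right]
    ring

/-- Reflections across all lines through c carry a farthest point onto the whole sphere. -/
lemma sphere_subset {K : Set E2} {c : E2} {r : ℝ} (hr : 0 < r)
    (hrefl : ∀ w : E2, w ≠ 0 → reflAxis c w '' K = K)
    {x₀ : E2} (hx₀K : x₀ ∈ K) (hx₀ : dist x₀ c = r)
    {p : E2} (hp : dist p c = r) : p ∈ K := by
  set a := x₀ - c with ha
  set b := p - c with hb
  have hna : ‖a‖ = r := by rw [ha, ← dist_eq_norm]; exact hx₀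
  have hnb : ‖b‖ = r := by rw [hb, ← dist_eq_norm]; exact hp
  have hane : a ≠ 0 := by
    intro h; rw [h, norm_zero] at hna; linarith
  by_cases hab : b = -a
  · obtain ⟨w, hw, hwa⟩ := exists_orth a hane
    have hmem := reflAxis_mem c w hw (hrefl w hw) hx₀K
    have heq : reflAxis c w x₀ = p := by
      rw [reflAxis, ← ha, hwa, mul_zero, zero_div, zero_smul, zero_sub]
      have h4 : p - c = -a := by rw [← hb, hab]
      have h5 : c + -a = p := by rw [← h4]; abel
      exact h5
    rw [heq] at hmem
    exact hmem
  · have hwne : a + b ≠ 0 := by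
      intro h
      exact hab (eq_neg_of_add_eq_zero_right h)
    have hmem := reflAxis_mem c (a+b) hwne (hrefl (a+b) hwne) hx₀K
    have hden : ⟪a+b, a+b⟫ ≠ 0 := inner_self_ne_zero.mpr hwne
    have hbb : ⟪b,b⟫ = ⟪a,a⟫ := by
      rw [real_inner_self_eq_norm_sq, real_inner_self_eq_norm_sq, hna, hnb]
    have hkey : 2 * ⟪a, a+b⟫ = ⟪a+b, a+b⟫ := by
      rw [inner_add_right, real_inner_add_add_self, hbb]
      ring
    have heq : reflAxis c (a+b) x₀ = p := by
      rw [reflAxis, ← ha, hkey, div_self hden, one_smul,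
        show a + b - a = b by abel, hb]
      abel
    rw [heq] at hmem
    exact hmem


end Aux12

/-- A planar convex body such that through every boundary point there passes an
axis of symmetry is a closed disc. -/
theorem stmt12 (K : Set E2) (hK : IsConvexBody K)
    (hsym : ∀ x ∈ frontier K, ∃ v : E2, v ≠ 0 ∧ reflAxis x v '' K = K) :
    ∃ (c : E2) (r : ℝ), 0 < r ∧ K = closedBall c r := by
  obtain ⟨hKconv, hcomp, hint⟩ := hK
  have hKne : K.Nonempty := hint.mono interior_subset
  obtain ⟨c, r, hsub, hmin⟩ := Aux12.exists_circum K hcomp hKne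
  -- the circumradius is positive
  obtain ⟨aa, haa⟩ := hint
  have hr : 0 < r := by
    obtain ⟨δ, hδ, hball⟩ := Metric.mem_nhds_iff.mp (mem_interior_iff_mem_nhds.mp haa)
    set e : E2 := EuclideanSpace.single 0 (1:ℝ) with he
    have hne' : ‖e‖ = 1 := by rw [he, EuclideanSpace.norm_single, norm_one]
    set aa' := aa + (δ/2) • e with haa'
    have h1 : aa' ∈ K := by
      apply hball
      rw [mem_ball, haa', dist_eq_norm, add_sub_cancel_left, norm_smul,
        Real.norm_eq_abs, abs_of_pos (by positivity), hne']
      linarith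
    have h2 : aa ∈ K := hball (mem_ball_self hδ)
    have d1 : dist aa' c ≤ r := mem_closedBall.mp (hsub h1)
    have d2 : dist aa c ≤ r := mem_closedBall.mp (hsub h2)
    have d3 : dist aa' aa = δ/2 := by
      rw [haa', dist_eq_norm, add_sub_cancel_left, norm_smul,
        Real.norm_eq_abs, abs_of_pos (by positivity), hne']
      ring
    have := dist_triangle aa' c aa
    rw [dist_comm c aa] at this
    linarith [d3 ▸ this]
  have hcint := Aux12.center_mem_interior hKconv hcomp ⟨aa, haa⟩ hsub hmin hr hsym
  have hrefl : ∀ w : E2, w ≠ 0 → reflAxis c w '' K = K := fun w hw =>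
    Aux12.all_reflections hKconv hcomp hcint hsub hmin hsym w hw
  -- a farthest point realizes the circumradius
  obtain ⟨x₀, hx₀K, hx₀max⟩ :=
    hcomp.exists_isMaxOn hKne ((continuous_id.dist continuous_const).continuousOn)
  have hx₀r : dist x₀ c = r := by
    have hle : dist x₀ c ≤ r := mem_closedBall.mp (hsub hx₀K)
    have hge : r ≤ dist x₀ c :=
      hmin c _ (fun y hy => mem_closedBall.mpr (hx₀max hy))
    linarith
  refine ⟨c, r, hr, Subset.antisymm hsub ?_⟩
  intro z hz
  by_cases hzc : z = c
  · rw [hzc]; exact interior_subset hcint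
  · set d := dist z c with hd
    have hdpos : 0 < d := dist_pos.mpr hzc
    have hdr : d ≤ r := mem_closedBall.mp hz
    have hnz : ‖z - c‖ = d := by rw [← dist_eq_norm]
    set p₁ : E2 := c + (r/d) • (z - c) with hp₁def
    set p₂ : E2 := c - (r/d) • (z - c) with hp₂def
    have hp₁ : dist p₁ c = r := by
      rw [hp₁def, dist_eq_norm, add_sub_cancel_left, norm_smul, Real.norm_eq_abs,
        abs_of_pos (by positivity), hnz]
      field_simp
    have hp₂ : dist p₂ c = r := by
      rw [hp₂def, dist_eq_norm, sub_sub_cancel_left, norm_neg, norm_smul, Real.norm_eq_abs,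
        abs_of_pos (by positivity), hnz]
      field_simp
    have h1 : p₁ ∈ K := Aux12.sphere_subset hr hrefl hx₀K hx₀r hp₁
    have h2 : p₂ ∈ K := Aux12.sphere_subset hr hrefl hx₀K hx₀r hp₂
    set α : ℝ := (1 + d/r)/2 with hα
    set β : ℝ := (1 - d/r)/2 with hβ
    have hαpos : 0 ≤ α := by
      rw [hα]; positivity
    have hβpos : 0 ≤ β := by
      rw [hβ]
      have : d/r ≤ 1 := by rw [div_le_one hr]; exact hdr
      linarith
    have hαβ : α + β = 1 := by rw [hα, hβ]; ring
    have hcoef : (α - β) * (r/d) = 1 := by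
      rw [hα, hβ]
      field_simp
      ring
    have hz' : α • p₁ + β • p₂ = z := by
      have key : α • p₁ + β • p₂ = (α + β) • c + ((α - β) * (r/d)) • (z - c) := by
        rw [hp₁def, hp₂def]
        module
      rw [key, hαβ, hcoef, one_smul, one_smul]
      abel
    have := hKconv h1 h2 hαpos hβpos hαβ
    rw [hz'] at this
    exact this
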